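/- Suppose g ∈ Q(φ) \ ↓Z. Then the restriction φ_g := φ↾_{g/∼} satisfies: P(φ_g) is nonempty, P(φ_g) ⊆ (g/∼) \ ↓Z, (g/∼) \ ↓Z ⊆ Q(φ_g), and for every θ ∈ P(φ_g), Eigen(σ_{φ↾_{g/∼}, 𝔴^{g/∼}}, V^{g/∼}) \ {0} = {r ∈ F \ {0} : 𝔴_θ · 𝔴_{φ(θ)} ⋯ 𝔴_{φ^{per(θ)−1}(θ)} = r^{per(θ)}}. -/

import Mathlib

open Function Set

/-- The set of eigenvalues of a linear self-map `T` of `W`: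
all `r` such that `T x = r • x` for some nonzero `x`. -/
def Eigen {F W : Type*} [Field F] [AddCommGroup W] [Module F W] (T : W →ₗ[F] W) : Set F :=
  {r | ∃ x : W, x ≠ 0 ∧ T x = r • x}

/-- `↓Z = ⋃_{n ≥ 0} φ^{-n}(Z)` where `Z = {α : 𝔴_α = 0}`. -/
def downZ {F Γ : Type*} [Field F] (φ : Γ → Γ) (w : Γ → F) : Set Γ :=
  ⋃ n : ℕ, φ^[n] ⁻¹' {α | w α = 0}

/-- Quasi-periodic points of `φ`: points `α` with `φ^n(α) = φ^m(α)` for some `n > m ≥ 1`. -/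
def quasiSet {Γ : Type*} (φ : Γ → Γ) : Set Γ :=
  {α | ∃ n m : ℕ, 1 ≤ m ∧ m < n ∧ φ^[n] α = φ^[m] α}

/-- Periodic points of `φ`: points `α` with `φ^n(α) = α` for some `n ≥ 1`. -/
def periodicSet {Γ : Type*} (φ : Γ → Γ) : Set Γ :=
  {α | ∃ n : ℕ, 1 ≤ n ∧ φ^[n] α = α}

/-- `per(α) = min {n ≥ 1 : φ^n(α) = α}` for a periodic point `α`. -/
noncomputable def perOf {Γ : Type*} (φ : Γ → Γ) (α : Γ) : ℕ :=
  sInf {n : ℕ | 1 ≤ n ∧ φ^[n] α = α}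

/-- The equivalence class `g/∼`, where `α ∼ β` iff `φ^n(α) = φ^m(β)` for some `n, m ≥ 1`. -/
def cls {Γ : Type*} (φ : Γ → Γ) (g : Γ) : Set Γ :=
  {β | ∃ n m : ℕ, 1 ≤ n ∧ 1 ≤ m ∧ φ^[n] β = φ^[m] g}

lemma cls_mapsTo {Γ : Type*} (φ : Γ → Γ) (g : Γ) : Set.MapsTo φ (cls φ g) (cls φ g) := by
  rintro β ⟨n, m, hn, hm, h⟩
  refine ⟨n, m + 1, hn, by omega, ?_⟩
  rw [← Function.iterate_succ_apply, Function.iterate_succ_apply', h]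
  exact (Function.iterate_succ_apply' φ m g).symm

/-- The restriction `φ↾_{g/∼} : g/∼ → g/∼`. -/
def clsRestrict {Γ : Type*} (φ : Γ → Γ) (g : Γ) : cls φ g → cls φ g :=
  fun b => ⟨φ b, cls_mapsTo φ g b.2⟩

/-- The restricted weighted generalized shift `σ_{φ↾_{g/∼}, 𝔴^{g/∼}}` on `V^{g/∼}`. -/
noncomputable def shiftSub {F V Γ : Type*} [Field F] [AddCommGroup V] [Module F V]
    (φ : Γ → Γ) (w : Γ → F) (g : Γ) : (cls φ g → V) →ₗ[F] (cls φ g → V) where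
  toFun x := fun b => w b • x (clsRestrict φ g b)
  map_add' x y := by funext b; simp
  map_smul' c x := by
    funext b
    simp only [Pi.smul_apply, RingHom.id_apply]
    rw [smul_comm]


lemma clsRestrict_iterate_coe {Γ : Type*} (φ : Γ → Γ) (g : Γ) (k : ℕ) (b : cls φ g) :
    (((clsRestrict φ g)^[k] b : cls φ g) : Γ) = φ^[k] (b : Γ) := by
  induction k generalizing b with
  | zero => rfl
  | succ k ih =>
    rw [Function.iterate_succ_apply, Function.iterate_succ_apply]
    exact ih (clsRestrict φ g b)

theorem restricted_shift_eigen_of_quasiperiodic_outside_downZ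
    {F V Γ : Type*} [Field F] [AddCommGroup V] [Module F V] [Nonempty Γ] [Nontrivial V]
    (φ : Γ → Γ) (w : Γ → F) (g : Γ) (hg : g ∈ quasiSet φ \ downZ φ w) :
    (periodicSet (clsRestrict φ g)).Nonempty ∧
    periodicSet (clsRestrict φ g) ⊆ {b : cls φ g | (b : Γ) ∉ downZ φ w} ∧
    {b : cls φ g | (b : Γ) ∉ downZ φ w} ⊆ quasiSet (clsRestrict φ g) ∧
    ∀ θ ∈ periodicSet (clsRestrict φ g),
      Eigen (shiftSub (V := V) φ w g) \ {0} =
        {r : F | r ≠ 0 ∧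
          ∏ i ∈ Finset.range (perOf (clsRestrict φ g) θ),
            w (((clsRestrict φ g)^[i] θ : cls φ g) : Γ)
          = r ^ perOf (clsRestrict φ g) θ} := by

  obtain ⟨hgq, hgZ⟩ := hg
  obtain ⟨n, m, hm1, hmn, hnm⟩ := hgq
  -- the canonical periodic point
  have hθ0cls : φ^[m] g ∈ cls φ g := by
    refine ⟨1, m + 1, le_refl 1, by omega, ?_⟩
    simp [Function.iterate_succ_apply']
  have hθ0per : (⟨φ^[m] g, hθ0cls⟩ : cls φ g) ∈ periodicSet (clsRestrict φ g) := by
    refine ⟨n - m, by omega, ?_⟩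
    apply Subtype.ext
    rw [clsRestrict_iterate_coe]
    show φ^[n - m] (φ^[m] g) = φ^[m] g
    rw [← Function.iterate_add_apply]
    have : n - m + m = n := by omega
    rw [this, hnm]
  -- Part 2 : periodic points avoid downZ
  have part2 : periodicSet (clsRestrict φ g) ⊆ {b : cls φ g | (b : Γ) ∉ downZ φ w} := by
    rintro θ ⟨p, hp1, hpθ⟩ hmem
    obtain ⟨a, c, ha, hc, hac⟩ := θ.2
    have hpθ' : φ^[p] (θ : Γ) = (θ : Γ) := by
      conv_rhs => rw [← hpθ]
      rw [clsRestrict_iterate_coe]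
    have hpt : ∀ t, φ^[p * t] (θ : Γ) = (θ : Γ) := by
      intro t
      induction t with
      | zero => simp
      | succ t ih =>
        rw [Nat.mul_succ, Function.iterate_add_apply, hpθ', ih]
    simp only [downZ, Set.mem_iUnion, Set.mem_preimage, Set.mem_setOf_eq] at hmem
    obtain ⟨k, hk⟩ := hmem
    apply hgZ
    have hbig : a ≤ k + p * (k + a) := by
      have : k + a ≤ p * (k + a) := Nat.le_mul_of_pos_left _ (by omega)
      omega
    refine Set.mem_iUnion.2 ⟨k + p * (k + a) - a + c, ?_⟩
    simp only [Set.mem_preimage, Set.mem_setOf_eq]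
    rw [Function.iterate_add_apply, ← hac, ← Function.iterate_add_apply]
    have h2 : k + p * (k + a) - a + a = k + p * (k + a) := by omega
    rw [h2, Function.iterate_add_apply, hpt, hk]
  -- Part 3
  have part3 : {b : cls φ g | (b : Γ) ∉ downZ φ w} ⊆ quasiSet (clsRestrict φ g) := by
    rintro b -
    obtain ⟨a, c, ha, hc, hac⟩ := b.2
    have key : ∀ s, φ^[s + a] (b : Γ) = φ^[s + c] g := by
      intro s
      rw [Function.iterate_add_apply, hac, ← Function.iterate_add_apply]
    have hgp : ∀ e, φ^[e + n] g = φ^[e + m] g := by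
      intro e
      rw [Function.iterate_add_apply, hnm, ← Function.iterate_add_apply]
    refine ⟨n + a, m + a, by omega, by omega, ?_⟩
    apply Subtype.ext
    rw [clsRestrict_iterate_coe, clsRestrict_iterate_coe]
    calc φ^[n + a] (b : Γ) = φ^[n + c] g := key n
      _ = φ^[c + n] g := by rw [Nat.add_comm]
      _ = φ^[c + m] g := hgp c
      _ = φ^[m + c] g := by rw [Nat.add_comm]
      _ = φ^[m + a] (b : Γ) := (key m).symm
  refine ⟨⟨_, hθ0per⟩, part2, part3, ?_⟩
  -- Part 4
  intro θ hθ
  set p := perOf (clsRestrict φ g) θ with hpdef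
  have hpS : p ∈ {q : ℕ | 1 ≤ q ∧ (clsRestrict φ g)^[q] θ = θ} := Nat.sInf_mem hθ
  obtain ⟨hp1, hpθ⟩ := hpS
  have hpθ' : φ^[p] (θ : Γ) = (θ : Γ) := by
    conv_rhs => rw [← hpθ]
    rw [clsRestrict_iterate_coe]
  have hmin : ∀ q, 1 ≤ q → φ^[q] (θ : Γ) = (θ : Γ) → p ≤ q := by
    intro q h1 h2
    apply Nat.sInf_le
    exact ⟨h1, Subtype.ext (by rw [clsRestrict_iterate_coe]; exact h2)⟩
  have hpt : ∀ t, φ^[p * t] (θ : Γ) = (θ : Γ) := by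
    intro t
    induction t with
    | zero => simp
    | succ t ih => rw [Nat.mul_succ, Function.iterate_add_apply, hpθ', ih]
  -- every element of the class eventually hits θ exactly
  have hreach : ∀ b : cls φ g, ∃ k, φ^[k] (b : Γ) = (θ : Γ) := by
    intro b
    obtain ⟨a, c, ha, hc, hac⟩ := b.2
    obtain ⟨a', c', ha', hc', hac'⟩ := θ.2
    set L := max c c' with hL
    have h1 : φ^[L - c + a] (b : Γ) = φ^[L] g := by
      rw [Function.iterate_add_apply, hac, ← Function.iterate_add_apply]
      congr 1
      omega
    have h2 : φ^[L - c' + a'] (θ : Γ) = φ^[L] g := by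
      rw [Function.iterate_add_apply, hac', ← Function.iterate_add_apply]
      congr 1
      omega
    set J := L - c' + a' with hJ
    have hJle : J ≤ p * J := Nat.le_mul_of_pos_left _ (by omega)
    refine ⟨p * J - J + (L - c + a), ?_⟩
    rw [Function.iterate_add_apply, h1, ← h2, ← Function.iterate_add_apply]
    have h3 : p * J - J + J = p * J := by omega
    rw [h3, hpt]
  -- product over the cycle, in Γ-terms
  have hprodcoe : (∏ i ∈ Finset.range p, w (((clsRestrict φ g)^[i] θ : cls φ g) : Γ))
      = ∏ i ∈ Finset.range p, w (φ^[i] (θ : Γ)) := by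
    apply Finset.prod_congr rfl
    intro i _
    rw [clsRestrict_iterate_coe]
  ext r
  simp only [Set.mem_diff, Set.mem_singleton_iff, Set.mem_setOf_eq]
  constructor
  · rintro ⟨⟨x, hx0, hx⟩, hr0⟩
    refine ⟨hr0, ?_⟩
    have hptw : ∀ b : cls φ g, w (b : Γ) • x (clsRestrict φ g b) = r • x b := by
      intro b
      have := congrFun hx b
      simpa [shiftSub] using this
    have hA : ∀ (k : ℕ) (b : cls φ g), (r ^ k) • x b =
        (∏ j ∈ Finset.range k, w (φ^[j] (b : Γ))) • x ((clsRestrict φ g)^[k] b) := by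
      intro k
      induction k with
      | zero => intro b; simp
      | succ k ih =>
        intro b
        have e1 : r ^ (k + 1) • x b = r ^ k • (r • x b) := by
          rw [smul_smul, ← pow_succ]
        rw [e1, ← hptw b, smul_comm (r ^ k) (w (b : Γ)), ih (clsRestrict φ g b)]
        rw [smul_smul, Finset.prod_range_succ']
        have e2 : ∀ j, φ^[j] ((clsRestrict φ g b : cls φ g) : Γ) = φ^[j + 1] (b : Γ) := by
          intro j
          rw [Function.iterate_succ_apply]
          rfl
        have e3 : (clsRestrict φ g)^[k] (clsRestrict φ g b) = (clsRestrict φ g)^[k + 1] b := by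
          rw [Function.iterate_succ_apply]
        rw [e3]
        congr 1
        rw [Finset.prod_congr rfl fun j _ => congrArg w (e2 j)]
        simp [Function.iterate_zero_apply, mul_comm]
    obtain ⟨b, hb⟩ := Function.ne_iff.1 hx0
    have hb' : x b ≠ 0 := hb
    obtain ⟨k, hk⟩ := hreach b
    have hkb : (clsRestrict φ g)^[k] b = θ := Subtype.ext (by rw [clsRestrict_iterate_coe]; exact hk)
    have hxθ : x θ ≠ 0 := by
      have := hA k b
      rw [hkb] at this
      intro h0
      rw [h0, smul_zero] at this
      exact smul_ne_zero (pow_ne_zero k hr0) hb' this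
    have hAp := hA p θ
    rw [hpθ] at hAp
    have hsub : (r ^ p - ∏ j ∈ Finset.range p, w (φ^[j] (θ : Γ))) • x θ = 0 := by
      rw [sub_smul, hAp, sub_self]
    have hzero := (smul_eq_zero.1 hsub).resolve_right hxθ
    rw [hprodcoe]
    exact (sub_eq_zero.1 hzero).symm
  · rintro ⟨hr0, hprod⟩
    rw [hprodcoe] at hprod
    refine ⟨?_, hr0⟩
    -- construct the eigenvector
    set K : cls φ g → ℕ := fun b => sInf {k | φ^[k] (b : Γ) = (θ : Γ)} with hKdef
    have hK : ∀ b : cls φ g, φ^[K b] (b : Γ) = (θ : Γ) := by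
      intro b
      exact Nat.sInf_mem (hreach b)
    have hKmin : ∀ (b : cls φ g) (k : ℕ), φ^[k] (b : Γ) = (θ : Γ) → K b ≤ k := by
      intro b k h
      exact Nat.sInf_le h
    obtain ⟨v, hv⟩ := exists_ne (0 : V)
    set c : cls φ g → F := fun b =>
      (r⁻¹) ^ (K b) * ∏ j ∈ Finset.range (K b), w (φ^[j] (b : Γ)) with hcdef
    have hKθ : K θ = 0 := Nat.le_zero.1 (hKmin θ 0 rfl)
    have hcθ : c θ = 1 := by simp [hcdef, hKθ]
    have hKsucc : ∀ b : cls φ g, K b ≠ 0 → K (clsRestrict φ g b) = K b - 1 := by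
      intro b hKb
      have h1 : K (clsRestrict φ g b) ≤ K b - 1 := by
        apply hKmin
        show φ^[K b - 1] (φ (b : Γ)) = (θ : Γ)
        rw [← Function.iterate_succ_apply, Nat.succ_eq_add_one]
        have : K b - 1 + 1 = K b := by omega
        rw [this]
        exact hK b
      have h2 : K b ≤ K (clsRestrict φ g b) + 1 := by
        apply hKmin
        rw [Function.iterate_succ_apply]
        exact hK (clsRestrict φ g b)
      omega
    have hstep : ∀ b : cls φ g, w (b : Γ) * c (clsRestrict φ g b) = r * c b := by
      intro b
      have hecoe : ∀ j, φ^[j] ((clsRestrict φ g b : cls φ g) : Γ) = φ^[j + 1] (b : Γ) := by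
        intro j
        rw [Function.iterate_succ_apply]
        rfl
      by_cases hKb : K b = 0
      · -- b = θ
        have hbθ : b = θ := Subtype.ext (by have := hK b; rwa [hKb] at this)
        subst hbθ
        rw [hcθ, mul_one]
        have hKφ : K (clsRestrict φ g b) = p - 1 := by
          have h1 : K (clsRestrict φ g b) ≤ p - 1 := by
            apply hKmin
            show φ^[p - 1] (φ (b : Γ)) = (b : Γ)
            rw [← Function.iterate_succ_apply, Nat.succ_eq_add_one]
            have : p - 1 + 1 = p := by omega
            rw [this]
            exact hpθ'
          have h2 : p ≤ K (clsRestrict φ g b) + 1 := by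
            apply hmin _ (by omega)
            rw [Function.iterate_succ_apply]
            exact hK (clsRestrict φ g b)
          omega
        rw [hcdef]
        simp only [hKφ]
        rw [Finset.prod_congr rfl fun j _ => congrArg w (hecoe j), ← mul_assoc,
          mul_comm (w (b : Γ)), mul_assoc]
        have hps : p - 1 + 1 = p := by omega
        have hfull : w (b : Γ) * ∏ j ∈ Finset.range (p - 1), w (φ^[j + 1] (b : Γ))
            = r ^ p := by
          rw [mul_comm, ← hprod, ← hps, Finset.prod_range_succ']
          simp
        rw [hfull]
        have : r ^ p = r ^ (p - 1) * r := by rw [← pow_succ, hps]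
        rw [this, ← mul_assoc, ← mul_pow, inv_mul_cancel₀ hr0, one_pow, one_mul]
      · have hKφ := hKsucc b hKb
        rw [hcdef]
        simp only [hKφ]
        rw [Finset.prod_congr rfl fun j _ => congrArg w (hecoe j)]
        have hks : K b - 1 + 1 = K b := by omega
        have hrhs : r * ((r⁻¹) ^ K b * ∏ j ∈ Finset.range (K b), w (φ^[j] (b : Γ)))
            = (r⁻¹) ^ (K b - 1) *
              ((∏ j ∈ Finset.range (K b - 1), w (φ^[j + 1] (b : Γ))) * w (b : Γ)) := by
          rw [← hks, Finset.prod_range_succ']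
          simp only [Function.iterate_zero_apply]
          rw [pow_succ]
          field_simp
          simp only [Nat.add_sub_cancel, Nat.add_sub_cancel_left]
          ring
        rw [hrhs]
        ring
    refine ⟨fun b => c b • v, ?_, ?_⟩
    · intro h0
      have := congrFun h0 θ
      simp only [Pi.zero_apply, hcθ, one_smul] at this
      exact hv this
    · funext b
      show w (b : Γ) • (c (clsRestrict φ g b) • v) = r • (c b • v)
      rw [smul_smul, smul_smul, hstep b]
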